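/- Let $f : [0,T] \times \mathbb{R}^d \times \mathbb{R}^m \to \mathbb{R}^d$ be continuously differentiable in $(x,u)$ with globally bounded derivatives, let $u, v$ be bounded measurable controls, and for $s \in \mathbb{R}$ let $x^s$ solve $(x^s)'(t) = f(t, x^s(t), u(t) + s v(t))$, $x^s(0) = x_0$. Let $y$ solve the linearized equation $y'(t) = \partial_x f(t, x^0(t), u(t)) y(t) + \partial_u f(t, x^0(t), u(t)) v(t)$, $y(0) = 0$. Then for each $t \in [0,T]$, $\lim_{s \to 0} \frac{x^s(t) - x^0(t)}{s} = y(t)$, i.e., the control-to-state map is directionally differentiable with derivative $y$. -/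

import Mathlib

open MeasureTheory Topology Filter

lemma gronwallBound_le_aux {K ε x : ℝ} (hK : 0 ≤ K) (hε : 0 ≤ ε) (hx : 0 ≤ x) :
    gronwallBound 0 K ε x ≤ ε * x * Real.exp (K * x) := by
  unfold gronwallBound
  split_ifs with h
  · subst h; simp [Real.exp_zero]
  · have hK' : 0 < K := lt_of_le_of_ne hK (Ne.symm h)
    have hkx : 0 ≤ K * x := mul_nonneg hK hx
    have h1 : Real.exp (K * x) - 1 ≤ (K * x) * Real.exp (K * x) := by
      have h2 := Real.add_one_le_exp (-(K * x))
      have h3 : Real.exp (-(K*x)) = (Real.exp (K*x))⁻¹ := Real.exp_neg _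
      have h4 := Real.exp_pos (K * x)
      rw [h3] at h2
      nlinarith [mul_inv_cancel₀ (ne_of_gt h4), mul_le_mul_of_nonneg_left h2 (le_of_lt h4)]
    rw [zero_mul, zero_add]
    rw [div_mul_eq_mul_div, div_le_iff₀ hK']
    nlinarith [Real.exp_pos (K*x), mul_le_mul_of_nonneg_left h1 hε]

lemma norm_sub_le_of_mem_segment_aux {E : Type*} [NormedAddCommGroup E] [NormedSpace ℝ E]
    {p q x : E} (hx : x ∈ segment ℝ p q) : ‖x - p‖ ≤ ‖q - p‖ := by
  obtain ⟨a, b, ha, hb, hab, rfl⟩ := hx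
  have h : a • p + b • q - p = b • (q - p) := by
    have : a = 1 - b := by linarith
    subst this; module
  rw [h, norm_smul, Real.norm_eq_abs, abs_of_nonneg hb]
  nlinarith [norm_nonneg (q - p)]

set_option maxHeartbeats 1000000 in
/-- Directional differentiability of the control-to-state map (Lemma A.1):
if `x^s` solves `(x^s)' = f(t, x^s, u + s v)`, `x^s(0) = x₀`, and `y` solves
the linearized equation, then `(x^s(t) - x^0(t))/s → y(t)` as `s → 0`. -/
theorem control_to_state_directional_derivative (d m : ℕ) (T : ℝ) (hT : 0 < T)
    (f : ℝ → EuclideanSpace ℝ (Fin d) → EuclideanSpace ℝ (Fin m) → EuclideanSpace ℝ (Fin d))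
    (D : ℝ → (EuclideanSpace ℝ (Fin d) × EuclideanSpace ℝ (Fin m)) →
      (EuclideanSpace ℝ (Fin d) × EuclideanSpace ℝ (Fin m)) →L[ℝ] EuclideanSpace ℝ (Fin d))
    -- f is C¹ in (x,u) with derivative D
    (hf : ∀ t p, HasFDerivAt (fun q : EuclideanSpace ℝ (Fin d) × EuclideanSpace ℝ (Fin m) =>
      f t q.1 q.2) (D t p) p)
    -- bounded first derivatives
    (hDb : ∃ M, ∀ t p, ‖D t p‖ ≤ M)
    -- bounded second derivatives (Lipschitz derivative)
    (hDlip : ∃ L ≥ (0:ℝ), ∀ t p q, ‖D t p - D t q‖ ≤ L * ‖p - q‖)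
    (u v : ℝ → EuclideanSpace ℝ (Fin m))
    (hu : Measurable u) (hv : Measurable v)
    (hub : ∃ M, ∀ t, ‖u t‖ ≤ M) (hvb : ∃ M, ∀ t, ‖v t‖ ≤ M)
    (x₀ : EuclideanSpace ℝ (Fin d))
    (X : ℝ → ℝ → EuclideanSpace ℝ (Fin d))
    (hX : ∀ s, ∀ t ∈ Set.Icc (0:ℝ) T, HasDerivAt (X s) (f t (X s t) (u t + s • v t)) t)
    (hX0 : ∀ s, X s 0 = x₀)
    (y : ℝ → EuclideanSpace ℝ (Fin d))
    (hy : ∀ t ∈ Set.Icc (0:ℝ) T, HasDerivAt y (D t (X 0 t, u t) (y t, v t)) t)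
    (hy0 : y 0 = 0) :
    ∀ t ∈ Set.Icc (0:ℝ) T,
      Tendsto (fun s : ℝ => s⁻¹ • (X s t - X 0 t)) (𝓝[≠] (0:ℝ)) (𝓝 (y t)) := by
  obtain ⟨M, hM⟩ := hDb
  have hM0 : 0 ≤ M := le_trans (norm_nonneg _) (hM 0 0)
  obtain ⟨L, hL0, hLip⟩ := hDlip
  obtain ⟨Mv, hMv⟩ := hvb
  have hMv0 : 0 ≤ Mv := le_trans (norm_nonneg _) (hMv 0)
  -- Lipschitz estimate
  have key1 : ∀ t (p q : EuclideanSpace ℝ (Fin d) × EuclideanSpace ℝ (Fin m)),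
      ‖f t p.1 p.2 - f t q.1 q.2‖ ≤ M * ‖p - q‖ := by
    intro t p q
    exact convex_univ.norm_image_sub_le_of_norm_hasFDerivWithin_le
      (f := fun q : EuclideanSpace ℝ (Fin d) × EuclideanSpace ℝ (Fin m) => f t q.1 q.2)
      (f' := fun x => D t x) (fun x _ => (hf t x).hasFDerivWithinAt) (fun x _ => hM t x)
      (Set.mem_univ q) (Set.mem_univ p)
  -- Taylor estimate
  have key2 : ∀ t (p q : EuclideanSpace ℝ (Fin d) × EuclideanSpace ℝ (Fin m)),
      ‖f t q.1 q.2 - f t p.1 p.2 - (D t p) (q - p)‖ ≤ L * ‖q - p‖ * ‖q - p‖ := by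
    intro t p q
    have hb : ∀ x ∈ segment ℝ p q, ‖D t x - D t p‖ ≤ L * ‖q - p‖ := by
      intro x hx
      calc ‖D t x - D t p‖ ≤ L * ‖x - p‖ := hLip t x p
        _ ≤ L * ‖q - p‖ := mul_le_mul_of_nonneg_left (norm_sub_le_of_mem_segment_aux hx) hL0
    have h2 := (convex_segment p q).norm_image_sub_le_of_norm_hasFDerivWithin_le'
      (f := fun q : EuclideanSpace ℝ (Fin d) × EuclideanSpace ℝ (Fin m) => f t q.1 q.2)
      (f' := fun x => D t x) (φ := D t p) (C := L * ‖q - p‖)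
      (fun x _ => (hf t x).hasFDerivWithinAt) hb
      (left_mem_segment ℝ p q) (right_mem_segment ℝ p q)
    exact h2
  set C₁ : ℝ := M * Mv * T * Real.exp (M * T) with hC₁def
  have hC₁0 : 0 ≤ C₁ := by positivity
  -- a priori bound ‖X s r - X 0 r‖ ≤ C₁ |s|
  have apriori : ∀ s : ℝ, ∀ r ∈ Set.Icc (0:ℝ) T, ‖X s r - X 0 r‖ ≤ C₁ * |s| := by
    intro s r hr
    have hcont : ContinuousOn (fun r => X s r - X 0 r) (Set.Icc 0 T) := fun r hr =>
      (((hX s r hr).continuousAt).sub ((hX 0 r hr).continuousAt)).continuousWithinAt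
    have hderiv : ∀ x ∈ Set.Ico (0:ℝ) T, HasDerivWithinAt (fun r => X s r - X 0 r)
        (f x (X s x) (u x + s • v x) - f x (X 0 x) (u x)) (Set.Ici x) x := by
      intro x hx
      have hx' : x ∈ Set.Icc (0:ℝ) T := ⟨hx.1, hx.2.le⟩
      have h0 : u x + (0:ℝ) • v x = u x := by simp
      have := ((hX s x hx').sub (hX 0 x hx')).hasDerivWithinAt (s := Set.Ici x)
      rwa [h0] at this
    have hbound : ∀ x ∈ Set.Ico (0:ℝ) T,
        ‖f x (X s x) (u x + s • v x) - f x (X 0 x) (u x)‖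
          ≤ M * ‖X s x - X 0 x‖ + M * Mv * |s| := by
      intro x hx
      have h1 := key1 x (X s x, u x + s • v x) (X 0 x, u x)
      have hsub : ((X s x, u x + s • v x) : _ × _) - (X 0 x, u x)
          = (X s x - X 0 x, s • v x) := by
        ext <;> simp
      rw [hsub] at h1
      have hnorm : ‖((X s x - X 0 x, s • v x) :
          EuclideanSpace ℝ (Fin d) × EuclideanSpace ℝ (Fin m))‖
          ≤ ‖X s x - X 0 x‖ + Mv * |s| := by
        rw [Prod.norm_def]
        refine max_le (le_add_of_nonneg_right (by positivity)) ?_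
        rw [norm_smul, Real.norm_eq_abs]
        nlinarith [hMv x, norm_nonneg (X s x - X 0 x), abs_nonneg s, norm_nonneg (v x)]
      calc ‖f x (X s x) (u x + s • v x) - f x (X 0 x) (u x)‖
          ≤ M * ‖((X s x - X 0 x, s • v x) : _ × _)‖ := h1
        _ ≤ M * (‖X s x - X 0 x‖ + Mv * |s|) := mul_le_mul_of_nonneg_left hnorm hM0
        _ = M * ‖X s x - X 0 x‖ + M * Mv * |s| := by ring
    have h0 : ‖X s 0 - X 0 0‖ ≤ (0:ℝ) := by simp [hX0]
    have := norm_le_gronwallBound_of_norm_deriv_right_le hcont hderiv h0 hbound r hr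
    calc ‖X s r - X 0 r‖ ≤ gronwallBound 0 M (M * Mv * |s|) (r - 0) := this
      _ ≤ (M * Mv * |s|) * (r - 0) * Real.exp (M * (r - 0)) :=
          gronwallBound_le_aux hM0 (by positivity) (by linarith [hr.1])
      _ ≤ (M * Mv * |s|) * T * Real.exp (M * T) := by
          rw [sub_zero]
          gcongr <;> exact hr.2
      _ = C₁ * |s| := by rw [hC₁def]; ring
  intro t ht
  set C₂ : ℝ := L * (C₁ + Mv)^2 * T * Real.exp (M * T) with hC₂def
  -- main estimate at time t
  have main : ∀ s : ℝ, ‖X s t - X 0 t - s • y t‖ ≤ C₂ * s^2 := by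
    intro s
    set ε : ℝ := L * ((C₁ + Mv) * |s|)^2 with hεdef
    have hε0 : 0 ≤ ε := by positivity
    have hsub : Set.Icc (0:ℝ) t ⊆ Set.Icc (0:ℝ) T := Set.Icc_subset_Icc le_rfl ht.2
    have hsubIco : Set.Ico (0:ℝ) t ⊆ Set.Icc (0:ℝ) T := fun x hx => ⟨hx.1, hx.2.le.trans ht.2⟩
    have hcont : ContinuousOn (fun r => X s r - X 0 r - s • y r) (Set.Icc 0 t) := fun r hr =>
      ((((hX s r (hsub hr)).continuousAt).sub ((hX 0 r (hsub hr)).continuousAt)).sub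
        ((hy r (hsub hr)).continuousAt.const_smul s)).continuousWithinAt
    have hderiv : ∀ x ∈ Set.Ico (0:ℝ) t, HasDerivWithinAt (fun r => X s r - X 0 r - s • y r)
        (f x (X s x) (u x + s • v x) - f x (X 0 x) (u x)
          - s • (D x (X 0 x, u x)) (y x, v x)) (Set.Ici x) x := by
      intro x hx
      have hx' : x ∈ Set.Icc (0:ℝ) T := hsubIco hx
      have h0 : u x + (0:ℝ) • v x = u x := by simp
      have := (((hX s x hx').sub (hX 0 x hx')).sub ((hy x hx').const_smul s)).hasDerivWithinAt
        (s := Set.Ici x)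
      rwa [h0] at this
    have hbound : ∀ x ∈ Set.Ico (0:ℝ) t,
        ‖f x (X s x) (u x + s • v x) - f x (X 0 x) (u x)
          - s • (D x (X 0 x, u x)) (y x, v x)‖
          ≤ M * ‖X s x - X 0 x - s • y x‖ + ε := by
      intro x hx
      have hx' : x ∈ Set.Icc (0:ℝ) T := hsubIco hx
      set p : EuclideanSpace ℝ (Fin d) × EuclideanSpace ℝ (Fin m) := (X 0 x, u x) with hp
      set q : EuclideanSpace ℝ (Fin d) × EuclideanSpace ℝ (Fin m) :=
        (X s x, u x + s • v x) with hq
      have hqp : q - p = (X s x - X 0 x, s • v x) := by ext <;> simp [hp, hq]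
      have hDsplit : (D x p) (q - p)
          = s • (D x p) (y x, v x) + (D x p) (X s x - X 0 x - s • y x, 0) := by
        rw [← (D x p).map_smul, ← (D x p).map_add, hqp]
        congr 1
        rw [Prod.smul_mk, Prod.mk_add_mk, Prod.mk.injEq]
        constructor
        · abel
        · simp
      have hGdecomp : f x (X s x) (u x + s • v x) - f x (X 0 x) (u x)
            - s • (D x p) (y x, v x)
          = (f x q.1 q.2 - f x p.1 p.2 - (D x p) (q - p))
            + (D x p) (X s x - X 0 x - s • y x, 0) := by
        rw [hDsplit, hq, hp]
        abel
      have hqpnorm : ‖q - p‖ ≤ (C₁ + Mv) * |s| := by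
        rw [hqp, Prod.norm_def]
        refine max_le ?_ ?_
        · calc ‖X s x - X 0 x‖ ≤ C₁ * |s| := apriori s x hx'
            _ ≤ (C₁ + Mv) * |s| := by nlinarith [abs_nonneg s]
        · rw [norm_smul, Real.norm_eq_abs]
          nlinarith [hMv x, abs_nonneg s, norm_nonneg (v x), hC₁0]
      have hA : ‖f x q.1 q.2 - f x p.1 p.2 - (D x p) (q - p)‖ ≤ ε := by
        calc ‖f x q.1 q.2 - f x p.1 p.2 - (D x p) (q - p)‖
            ≤ L * ‖q - p‖ * ‖q - p‖ := key2 x p q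
          _ ≤ L * ((C₁ + Mv) * |s|) * ((C₁ + Mv) * |s|) := by
              have hB0 : (0:ℝ) ≤ (C₁ + Mv) * |s| := mul_nonneg (by linarith) (abs_nonneg s)
              rw [mul_assoc, mul_assoc]
              exact mul_le_mul_of_nonneg_left
                (mul_le_mul hqpnorm hqpnorm (norm_nonneg _) hB0) hL0
          _ = ε := by rw [hεdef]; ring
      have hB : ‖(D x p) (X s x - X 0 x - s • y x, 0)‖
          ≤ M * ‖X s x - X 0 x - s • y x‖ := by
        calc ‖(D x p) ((X s x - X 0 x - s • y x,
              (0 : EuclideanSpace ℝ (Fin m))) : _ × _)‖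
            ≤ ‖D x p‖ * ‖((X s x - X 0 x - s • y x,
              (0 : EuclideanSpace ℝ (Fin m))) : _ × _)‖ := (D x p).le_opNorm _
          _ ≤ M * ‖X s x - X 0 x - s • y x‖ := by
              rw [Prod.norm_def]
              simp only [norm_zero]
              rw [max_eq_left (norm_nonneg _)]
              exact mul_le_mul_of_nonneg_right (hM x p) (norm_nonneg _)
      calc ‖f x (X s x) (u x + s • v x) - f x (X 0 x) (u x)
            - s • (D x p) (y x, v x)‖
          = ‖(f x q.1 q.2 - f x p.1 p.2 - (D x p) (q - p))
            + (D x p) (X s x - X 0 x - s • y x, 0)‖ := by rw [hGdecomp]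
        _ ≤ ‖f x q.1 q.2 - f x p.1 p.2 - (D x p) (q - p)‖
            + ‖(D x p) (X s x - X 0 x - s • y x, 0)‖ := norm_add_le _ _
        _ ≤ ε + M * ‖X s x - X 0 x - s • y x‖ := add_le_add hA hB
        _ = M * ‖X s x - X 0 x - s • y x‖ + ε := by ring
    have h0 : ‖X s 0 - X 0 0 - s • y 0‖ ≤ (0:ℝ) := by simp [hX0, hy0]
    have := norm_le_gronwallBound_of_norm_deriv_right_le hcont hderiv h0 hbound t
      ⟨ht.1, le_rfl⟩
    calc ‖X s t - X 0 t - s • y t‖ ≤ gronwallBound 0 M ε (t - 0) := this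
      _ ≤ ε * (t - 0) * Real.exp (M * (t - 0)) :=
          gronwallBound_le_aux hM0 hε0 (by linarith [ht.1])
      _ ≤ ε * T * Real.exp (M * T) := by
          rw [sub_zero]
          gcongr <;> exact ht.2
      _ = C₂ * s^2 := by rw [hC₂def, hεdef, ← sq_abs s]; ring
  -- conclude
  rw [tendsto_iff_norm_sub_tendsto_zero]
  apply squeeze_zero' (g := fun s : ℝ => C₂ * |s|)
  · exact Eventually.of_forall fun s => norm_nonneg _
  · filter_upwards [self_mem_nhdsWithin] with s hs
    have hs0 : s ≠ 0 := hs
    have heq : s⁻¹ • (X s t - X 0 t) - y t = s⁻¹ • (X s t - X 0 t - s • y t) := by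
      rw [smul_sub _ (X s t - X 0 t) (s • y t), smul_smul, inv_mul_cancel₀ hs0, one_smul]
    rw [heq, norm_smul, Real.norm_eq_abs, abs_inv]
    have habs : 0 < |s| := abs_pos.mpr hs0
    calc |s|⁻¹ * ‖X s t - X 0 t - s • y t‖ ≤ |s|⁻¹ * (C₂ * s^2) := by
          exact mul_le_mul_of_nonneg_left (main s) (by positivity)
      _ = C₂ * |s| := by
          have hss : s^2 = |s| * |s| := by rw [← sq_abs]; ring
          rw [hss]
          field_simp
  · have : Tendsto (fun s : ℝ => C₂ * |s|) (𝓝 0) (𝓝 (C₂ * |(0:ℝ)|)) :=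
      (continuous_const.mul continuous_abs).tendsto 0
    simpa using this.mono_left nhdsWithin_le_nhds
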